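/- Let R be a commutative local ring with maximal ideal m. Then the ring R((t))^√ of Laurent series over R with nilpotent negative coefficients is a local ring: its units are exactly the series whose coefficient of t⁰ is a unit of R, and its maximal ideal is the set of f ∈ R((t))^√ whose coefficient of t⁰ lies in m. -/

import Mathlib

/-- The subset `R((t))^√` of the Laurent series ring: series all of whose coefficients
in negative degrees are nilpotent. -/
def nilLaurentSet (R : Type*) [CommRing R] : Set (LaurentSeries R) :=
  {f | ∀ n : ℤ, n < 0 → IsNilpotent (f.coeff n)}

namespace NilLaurentAux

open HahnSeries Finset

variable {R : Type*} [CommRing R]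

lemma zero_mem : (0 : LaurentSeries R) ∈ nilLaurentSet R := fun n _ => by
  rw [HahnSeries.coeff_zero]; exact ⟨1, by simp⟩

lemma one_mem : (1 : LaurentSeries R) ∈ nilLaurentSet R := fun n hn => by
  rw [HahnSeries.coeff_one, if_neg hn.ne]; exact ⟨1, by simp⟩

lemma add_mem {f g : LaurentSeries R} (hf : f ∈ nilLaurentSet R) (hg : g ∈ nilLaurentSet R) :
    f + g ∈ nilLaurentSet R := fun n hn => by
  rw [HahnSeries.coeff_add]
  exact Commute.isNilpotent_add (Commute.all _ _) (hf n hn) (hg n hn)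

lemma neg_mem {f : LaurentSeries R} (hf : f ∈ nilLaurentSet R) :
    -f ∈ nilLaurentSet R := fun n hn => by
  rw [HahnSeries.coeff_neg]
  exact (hf n hn).neg

lemma mul_mem {f g : LaurentSeries R} (hf : f ∈ nilLaurentSet R) (hg : g ∈ nilLaurentSet R) :
    f * g ∈ nilLaurentSet R := fun n hn => by
  rw [HahnSeries.coeff_mul]
  refine isNilpotent_sum fun ij hij => ?_
  rw [Finset.mem_addAntidiagonal] at hij
  rcases lt_or_ge ij.1 0 with h1 | h1
  · exact Commute.isNilpotent_mul_right (Commute.all _ _) (hf _ h1)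
  · have h2 : ij.2 < 0 := by omega
    exact Commute.isNilpotent_mul_left (Commute.all _ _) (hg _ h2)

lemma pow_mem {f : LaurentSeries R} (hf : f ∈ nilLaurentSet R) (k : ℕ) :
    f ^ k ∈ nilLaurentSet R := by
  induction k with
  | zero => simpa using one_mem
  | succ k ih => rw [pow_succ]; exact mul_mem ih hf

lemma sum_mem {ι : Type*} {s : Finset ι} {F : ι → LaurentSeries R}
    (h : ∀ i ∈ s, F i ∈ nilLaurentSet R) : (∑ i ∈ s, F i) ∈ nilLaurentSet R := by
  classical
  induction s using Finset.induction with
  | empty => simpa using zero_mem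
  | insert _ _ hns ih =>
    rw [Finset.sum_insert hns]
    exact add_mem (h _ (Finset.mem_insert_self _ _))
      (ih fun i hi => h i (Finset.mem_insert_of_mem hi))

lemma coeff_sum {ι : Type*} (s : Finset ι) (F : ι → LaurentSeries R) (n : ℤ) :
    (∑ i ∈ s, F i).coeff n = ∑ i ∈ s, (F i).coeff n := by
  classical
  induction s using Finset.induction with
  | empty => simp
  | insert _ _ hns ih => rw [Finset.sum_insert hns, Finset.sum_insert hns, HahnSeries.coeff_add, ih]

lemma ofPS_mem (x : PowerSeries R) : (HahnSeries.ofPowerSeries ℤ R x) ∈ nilLaurentSet R := by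
  intro n hn
  rw [HahnSeries.ofPowerSeries_apply, HahnSeries.embDomain_notin_range]
  · exact ⟨1, by simp⟩
  · rintro ⟨m, hm⟩
    have hm : (m : ℤ) = n := hm
    omega

lemma isNilpotent_single {n : ℤ} {c : R} (hc : IsNilpotent c) :
    IsNilpotent (HahnSeries.single n c : LaurentSeries R) := by
  obtain ⟨k, hk⟩ := hc
  exact ⟨k, by rw [HahnSeries.single_pow, hk, HahnSeries.single_eq_zero]⟩

lemma isUnit_coeff_zero {f g : LaurentSeries R} (hf : f ∈ nilLaurentSet R)
    (hg : g ∈ nilLaurentSet R) (h : f * g = 1) : IsUnit (f.coeff 0) := by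
  classical
  set s := Finset.antidiagonal f.isPWO_support g.isPWO_support (0 : ℤ) with hs
  set c : R := ∑ ij ∈ s.erase ((0 : ℤ), (0 : ℤ)), f.coeff ij.1 * g.coeff ij.2 with hc
  have hnil : IsNilpotent c := by
    refine isNilpotent_sum fun ij hij => ?_
    obtain ⟨hne, hmem⟩ := Finset.mem_erase.mp hij
    rw [hs, Finset.mem_addAntidiagonal] at hmem
    rcases lt_trichotomy ij.1 0 with h1 | h1 | h1
    · exact Commute.isNilpotent_mul_right (Commute.all _ _) (hf _ h1)
    · exact absurd (Prod.ext h1 (by omega)) hne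
    · exact Commute.isNilpotent_mul_left (Commute.all _ _) (hg _ (by omega))
  have hsum : (∑ ij ∈ s, f.coeff ij.1 * g.coeff ij.2) = 1 := by
    rw [← HahnSeries.coeff_mul, h, HahnSeries.coeff_one, if_pos rfl]
  have hsplit : f.coeff 0 * g.coeff 0 + c = 1 := by
    by_cases h00 : ((0 : ℤ), (0 : ℤ)) ∈ s
    · exact hc ▸ (Finset.add_sum_erase s (fun ij => f.coeff ij.1 * g.coeff ij.2) h00).trans hsum
    · have h0 : f.coeff 0 = 0 ∨ g.coeff 0 = 0 := by
        by_contra hcon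
        push_neg at hcon
        exact h00 (Finset.mem_addAntidiagonal.mpr ⟨hcon.1, hcon.2, add_zero 0⟩)
      have hcz : f.coeff 0 * g.coeff 0 = 0 := by
        rcases h0 with h0 | h0 <;> rw [h0] <;> ring
      rw [hcz, zero_add, hc, Finset.erase_eq_of_notMem h00]
      exact hsum
    
  have hfg0 : f.coeff 0 * g.coeff 0 = 1 - c := eq_sub_of_add_eq hsplit
  have : IsUnit (f.coeff 0 * g.coeff 0) := hfg0 ▸ hnil.isUnit_one_sub
  exact isUnit_of_mul_isUnit_left this

lemma exists_inv {f : LaurentSeries R} (hf : f ∈ nilLaurentSet R) (hu : IsUnit (f.coeff 0))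
    [Nontrivial R] : ∃ g ∈ nilLaurentSet R, f * g = 1 := by
  classical
  by_cases hf0 : f = 0
  · exfalso
    rw [hf0, HahnSeries.coeff_zero] at hu
    exact one_ne_zero (isUnit_zero_iff.mp hu).symm
  set P : PowerSeries R := PowerSeries.mk fun k => f.coeff k with hP
  have hPunit : IsUnit P := by
    rw [PowerSeries.isUnit_iff_constantCoeff]
    simpa [hP, PowerSeries.constantCoeff_mk] using hu
  obtain ⟨Q, hQ⟩ := hPunit.exists_right_inv
  set p : LaurentSeries R := HahnSeries.ofPowerSeries ℤ R P with hp
  set q : LaurentSeries R := HahnSeries.ofPowerSeries ℤ R Q with hq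
  have hpq : p * q = 1 := by
    rw [hp, hq, ← map_mul, hQ, map_one]
  set d : ℤ := f.order with hd
  set fneg : LaurentSeries R :=
    ∑ m ∈ Finset.Ico d 0, HahnSeries.single m (f.coeff m) with hfneg
  -- decomposition
  have hdecomp : f = p + fneg := by
    ext n
    rw [HahnSeries.coeff_add, hfneg, coeff_sum]
    have hsum_mem : n ∈ Finset.Ico d 0 →
        (∑ m ∈ Finset.Ico d 0, (HahnSeries.single m (f.coeff m)).coeff n) = f.coeff n :=
      fun hmem => (Finset.sum_eq_single_of_mem n hmem
        (fun m _ hne => HahnSeries.coeff_single_of_ne (Ne.symm hne))).trans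
        (HahnSeries.coeff_single_same n (f.coeff n))
    have hsum_nmem : n ∉ Finset.Ico d 0 →
        (∑ m ∈ Finset.Ico d 0, (HahnSeries.single m (f.coeff m)).coeff n) = 0 := by
      intro hmem
      refine Finset.sum_eq_zero fun m hm => HahnSeries.coeff_single_of_ne fun he => ?_
      exact hmem (he ▸ hm)
    rcases le_or_gt 0 n with hn | hn
    · have h1 : p.coeff n = f.coeff n := by
        have : n = ((n.toNat : ℕ) : ℤ) := by omega
        rw [hp, this, HahnSeries.ofPowerSeries_apply_coeff, hP, PowerSeries.coeff_mk]
      rw [h1, hsum_nmem (by simp [Finset.mem_Ico]; omega), add_zero]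
    · have h1 : p.coeff n = 0 := by
        rw [hp, HahnSeries.ofPowerSeries_apply, HahnSeries.embDomain_notin_range]
        rintro ⟨m, hm⟩
        have hm : (m : ℤ) = n := hm
        omega
      rw [h1, zero_add]
      by_cases hmem : n ∈ Finset.Ico d 0
      · rw [hsum_mem hmem]
      · rw [hsum_nmem hmem]
        rw [Finset.mem_Ico] at hmem
        push_neg at hmem
        have hnd : n < d := by
          rcases lt_or_ge n d with hlt | hle
          · exact hlt
          · exact absurd hn (not_lt.mpr (hmem hle))
        exact HahnSeries.coeff_eq_zero_of_lt_order hnd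
  have hfneg_nil : IsNilpotent fneg := by
    refine isNilpotent_sum fun m hm => ?_
    rw [Finset.mem_Ico] at hm
    exact isNilpotent_single (hf m hm.2)
  have hfneg_mem : fneg ∈ nilLaurentSet R := by
    refine sum_mem fun m hm => fun n hn => ?_
    rw [HahnSeries.coeff_single]
    rw [Finset.mem_Ico] at hm
    split
    · next heq => exact heq ▸ hf m hm.2
    · exact ⟨1, by simp⟩
  set u : LaurentSeries R := q * fneg with hu'
  have hu_nil : IsNilpotent u := Commute.isNilpotent_mul_left (Commute.all _ _) hfneg_nil
  obtain ⟨M, hM⟩ := hu_nil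
  have hu_mem : u ∈ nilLaurentSet R := mul_mem (ofPS_mem Q) hfneg_mem
  set SU : LaurentSeries R := ∑ k ∈ Finset.range M, (-u) ^ k with hSU
  have hgeom : SU * (1 + u) = 1 := by
    have h1 : (-u) ^ M = 0 := by
      have h2 := neg_pow u M
      rw [h2, hM, mul_zero]
    have h2 := geom_sum_mul (-u) M
    rw [h1] at h2
    linear_combination -h2
  refine ⟨q * SU, mul_mem (ofPS_mem Q) (sum_mem fun k _ => pow_mem (neg_mem hu_mem) k), ?_⟩
  calc f * (q * SU) = (p * q + q * fneg) * SU := by rw [hdecomp]; ring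
    _ = SU * (1 + u) := by rw [hpq, hu']; ring
    _ = 1 := hgeom

lemma nilpotent_mem_maximalIdeal [IsLocalRing R] {x : R} (hx : IsNilpotent x) :
    x ∈ IsLocalRing.maximalIdeal R := by
  rw [IsLocalRing.mem_maximalIdeal, mem_nonunits_iff]
  intro h
  obtain ⟨k, hk⟩ := hx
  have := h.pow k
  rw [hk, isUnit_zero_iff] at this
  exact one_ne_zero this.symm

end NilLaurentAux

/-- Let `R` be a commutative local ring with maximal ideal `m`. Then the ring
`R((t))^√` of Laurent series over `R` with nilpotent negative coefficients is a local ring: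
its units are exactly the series whose coefficient of `t⁰` is a unit of `R`, and its
maximal ideal is the set of `f ∈ R((t))^√` whose coefficient of `t⁰` lies in `m`. -/
theorem nilLaurent_isLocalRing {R : Type*} [CommRing R] [IsLocalRing R] :
    (∀ f ∈ nilLaurentSet R,
      ((∃ g ∈ nilLaurentSet R, f * g = 1) ↔ IsUnit (f.coeff 0))) ∧
    (∀ f ∈ nilLaurentSet R,
      (f.coeff 0 ∈ IsLocalRing.maximalIdeal R ↔ ¬ ∃ g ∈ nilLaurentSet R, f * g = 1)) ∧
    ((0 : LaurentSeries R) ∈ nilLaurentSet R ∧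
      (0 : LaurentSeries R).coeff 0 ∈ IsLocalRing.maximalIdeal R) ∧
    ((1 : LaurentSeries R) ∈ nilLaurentSet R ∧
      (1 : LaurentSeries R).coeff 0 ∉ IsLocalRing.maximalIdeal R) ∧
    (∀ f ∈ nilLaurentSet R, ∀ g ∈ nilLaurentSet R,
      f.coeff 0 ∈ IsLocalRing.maximalIdeal R → g.coeff 0 ∈ IsLocalRing.maximalIdeal R →
        (f + g) ∈ nilLaurentSet R ∧ (f + g).coeff 0 ∈ IsLocalRing.maximalIdeal R) ∧
    (∀ f ∈ nilLaurentSet R, ∀ g ∈ nilLaurentSet R,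
      g.coeff 0 ∈ IsLocalRing.maximalIdeal R →
        (f * g) ∈ nilLaurentSet R ∧ (f * g).coeff 0 ∈ IsLocalRing.maximalIdeal R) := by
  classical
  have hunits : ∀ f ∈ nilLaurentSet R,
      ((∃ g ∈ nilLaurentSet R, f * g = 1) ↔ IsUnit (f.coeff 0)) := by
    intro f hf
    constructor
    · rintro ⟨g, hg, hfg⟩
      exact NilLaurentAux.isUnit_coeff_zero hf hg hfg
    · intro hu
      exact NilLaurentAux.exists_inv hf hu
  refine ⟨hunits, ?_, ?_, ?_, ?_, ?_⟩
  · intro f hf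
    rw [hunits f hf, IsLocalRing.mem_maximalIdeal, mem_nonunits_iff]
  · exact ⟨NilLaurentAux.zero_mem, by rw [HahnSeries.coeff_zero]; exact Ideal.zero_mem _⟩
  · refine ⟨NilLaurentAux.one_mem, ?_⟩
    rw [HahnSeries.coeff_one, if_pos rfl, IsLocalRing.mem_maximalIdeal, mem_nonunits_iff]
    exact fun h => h isUnit_one
  · intro f hf g hg hf0 hg0
    exact ⟨NilLaurentAux.add_mem hf hg, by
      rw [HahnSeries.coeff_add]; exact Ideal.add_mem _ hf0 hg0⟩
  · intro f hf g hg hg0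
    refine ⟨NilLaurentAux.mul_mem hf hg, ?_⟩
    rw [HahnSeries.coeff_mul]
    refine Ideal.sum_mem _ fun ij hij => ?_
    rw [Finset.mem_addAntidiagonal] at hij
    rcases lt_trichotomy ij.2 0 with h2 | h2 | h2
    · exact Ideal.mul_mem_left _ _ (NilLaurentAux.nilpotent_mem_maximalIdeal (hg _ h2))
    · rw [h2]
      exact Ideal.mul_mem_left _ _ hg0
    · have h1 : ij.1 < 0 := by omega
      exact Ideal.mul_mem_right _ _ (NilLaurentAux.nilpotent_mem_maximalIdeal (hf _ h1))
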